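/- Let (S, L) be a greedoid language and w : L → ℝ. Suppose the greedy-optimality condition is violated, i.e. there exist αx ∈ L with w(αx) ≤ w(αy) for every y ∈ Γ(α), and a basic word γ = αzβ ∈ L, such that no basic word of the form αxε satisfies w(αxε) ≤ w(γ). Then there exists α′ ∈ L such that some legal run of the greedoid greedy algorithm on the contracted greedoid language (S \ α̃′, L/α̃′), where L/α̃′ = {β : α′β ∈ L}, with objective function w̄(β) = w(α′β), outputs a basic word of L/α̃′ that is not of minimum weight with respect to w̄ among basic words of L/α̃′. -/

import Mathlib

open Classical in
lemma greedy_extend {α : Type*} [Fintype α] [DecidableEq α]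
    (L : Set (List α)) (w : List α → ℝ)
    (hsimple : ∀ v ∈ L, List.Nodup v)
    (a : List α) :
    ∀ (n : ℕ) (c : List α), a ++ c ∈ L → Fintype.card α - (a ++ c).length ≤ n →
    ∃ d : List α, a ++ (c ++ d) ∈ L ∧
      (∀ y : α, a ++ (c ++ d ++ [y]) ∉ L) ∧
      (∀ (e : List α) (u : α) (f : List α), d = e ++ u :: f →
        ∀ y : α, y ∉ a → y ∉ c ++ e → a ++ (c ++ e ++ [y]) ∈ L →
          w (a ++ (c ++ e ++ [u])) ≤ w (a ++ (c ++ e ++ [y]))) := by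
  intro n
  induction n with
  | zero =>
    intro c hc hcard
    refine ⟨[], by simpa using hc, ?_, ?_⟩
    · intro y hy
      have hnd := hsimple _ hy
      have hlen := List.Nodup.length_le_card hnd
      simp only [List.length_append, List.length_cons, List.length_nil] at hlen hcard
      omega
    · intro e u f h
      simp at h
  | succ n ih =>
    intro c hc hcard
    by_cases hne : ∃ y : α, a ++ (c ++ [y]) ∈ L
    · set T : Finset α := Finset.univ.filter (fun y => a ++ (c ++ [y]) ∈ L) with hT
      have hTne : T.Nonempty := by
        obtain ⟨y, hy⟩ := hne
        exact ⟨y, by simp [hT, hy]⟩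
      obtain ⟨u, huT, hu⟩ := Finset.exists_min_image T (fun y => w (a ++ (c ++ [y]))) hTne
      have huL : a ++ (c ++ [u]) ∈ L := by simpa [hT] using huT
      have hcard' : Fintype.card α - (a ++ (c ++ [u])).length ≤ n := by
        simp only [List.length_append, List.length_cons, List.length_nil] at hcard ⊢
        omega
      obtain ⟨d', hd'L, hd'stop, hd'leg⟩ := ih (c ++ [u]) huL hcard'
      refine ⟨u :: d', ?_, ?_, ?_⟩
      · simpa [List.append_assoc] using hd'L
      · intro y hy
        exact hd'stop y (by simpa [List.append_assoc] using hy)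
      · intro e u' f h y hya hyc hyL
        cases e with
        | nil =>
          simp at h
          obtain ⟨rfl, rfl⟩ := h
          simp only [List.append_nil] at hyc hyL ⊢
          have hyT : y ∈ T := by simp [hT, hyL]
          exact hu y hyT
        | cons u₀ e' =>
          simp at h
          obtain ⟨rfl, rfl⟩ := h
          have := hd'leg e' u' f rfl y hya
            (by simpa [List.append_assoc] using hyc)
            (by simpa [List.append_assoc] using hyL)
          simpa [List.append_assoc] using this
    · push_neg at hne
      refine ⟨[], by simpa using hc, ?_, ?_⟩
      · intro y hy
        exact hne y (by simpa using hy)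
      · intro e u f h
        simp at h


/-- (Szeszlér, Corollary 1.) Let `(S, L)` be a greedoid language (the
finite ground set `S` is the finite type `α`) and `w : L → ℝ`. Suppose the greedy-optimality
condition is violated: there exist `a ++ [x] ∈ L` with `w (a ++ [x]) ≤ w (a ++ [y])` for
every continuation `y ∈ Γ(a)`, and a basic word `a ++ z :: b ∈ L`, such that no basic word
of the form `a ++ x :: ε` satisfies `w (a ++ x :: ε) ≤ w (a ++ z :: b)`. Then there exists
`a' ∈ L` such that some legal run of the greedy algorithm on the contraction
`L / a' = {β : a' ++ β ∈ L}` (over ground set `S \ ã'`), with objective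
`w̄ β = w (a' ++ β)`, outputs a basic word of `L / a'` that is not of minimum weight
among basic words of `L / a'`. -/
theorem greedoid_greedy_condition_violation_suboptimal_on_contraction
    {α : Type*} [Fintype α] [DecidableEq α]
    (L : Set (List α)) (w : List α → ℝ)
    -- `L` is a simple language: all words consist of pairwise distinct letters
    (hsimple : ∀ v ∈ L, List.Nodup v)
    -- (i) the empty word belongs to `L`
    (hempty : ([] : List α) ∈ L)
    -- (ii) `L` is closed under taking prefixes
    (hprefix : ∀ a b : List α, a ++ b ∈ L → a ∈ L)
    -- (iii) the exchange property
    (hexchange : ∀ a ∈ L, ∀ b ∈ L, b.length < a.length → ∃ x ∈ a, b ++ [x] ∈ L)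
    -- the greedy-optimality condition is violated:
    (hviol : ∃ (a : List α) (x : α), a ++ [x] ∈ L ∧
      (∀ y : α, y ∉ a → a ++ [y] ∈ L → w (a ++ [x]) ≤ w (a ++ [y])) ∧
      ∃ (z : α) (b : List α), a ++ z :: b ∈ L ∧
        (∀ β ∈ L, β.length ≤ (a ++ z :: b).length) ∧
        (∀ ε : List α, a ++ x :: ε ∈ L →
          (∀ β ∈ L, β.length ≤ (a ++ x :: ε).length) →
          ¬ w (a ++ x :: ε) ≤ w (a ++ z :: b))) :
    ∃ a' ∈ L, ∃ γ : List α,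
      -- `γ` belongs to the contraction `L / a'`
      a' ++ γ ∈ L ∧
      -- the run stopped: `γ` has no continuation in `L / a'`
      (∀ x : α, x ∉ a' → x ∉ γ → a' ++ (γ ++ [x]) ∉ L) ∧
      -- the run is legal: each chosen letter minimizes `w̄` among continuations
      (∀ i : Fin γ.length, ∀ y : α, y ∉ a' → y ∉ γ.take i.val →
        a' ++ (γ.take i.val ++ [y]) ∈ L →
        w (a' ++ (γ.take i.val ++ [γ.get i])) ≤ w (a' ++ (γ.take i.val ++ [y]))) ∧
      -- the output `γ` is a basic word of `L / a'`
      (∀ β : List α, a' ++ β ∈ L → β.length ≤ γ.length) ∧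
      -- ... but it is not of minimum weight among basic words of `L / a'`
      (∃ β : List α, a' ++ β ∈ L ∧
        (∀ β' : List α, a' ++ β' ∈ L → β'.length ≤ β.length) ∧
        w (a' ++ β) < w (a' ++ γ)) := by
  obtain ⟨a, x, hax, hmin, z, b, hzb, hbasic, hnot⟩ := hviol
  have haL : a ∈ L := hprefix a [x] hax
  obtain ⟨d, hdL, hdstop, hdleg⟩ := greedy_extend L w hsimple a (Fintype.card α) [x]
    (by simpa using hax) (Nat.sub_le _ _)
  set γ : List α := x :: d with hγ
  have hγL : a ++ γ ∈ L := by simpa using hdL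
  have hstop : ∀ y : α, a ++ (γ ++ [y]) ∉ L := by
    intro y hy
    exact hdstop y (by simpa [hγ] using hy)
  -- global basicness of a ++ γ
  have hgb : ∀ β ∈ L, β.length ≤ (a ++ γ).length := by
    intro β hβ
    by_contra h
    push_neg at h
    obtain ⟨y, -, hy⟩ := hexchange β hβ (a ++ γ) hγL h
    exact hstop y (by simpa [List.append_assoc] using hy)
  refine ⟨a, haL, γ, hγL, fun y _ _ => hstop y, ?_, ?_, z :: b, hzb, ?_, ?_⟩
  · rintro ⟨i, hi⟩ y hya hyt hyL
    cases i with
    | zero =>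
      simp only [List.take_zero, List.nil_append, hγ, List.get] at hyL ⊢
      simpa [hγ] using hmin y hya (by simpa using hyL)
    | succ j =>
      have hj : j < d.length := by simpa [hγ] using hi
      have hdec : d = d.take j ++ d.get ⟨j, hj⟩ :: d.drop (j + 1) := by
        conv_lhs => rw [← List.take_append_drop j d]
        rw [List.drop_eq_getElem_cons hj]
        simp
      have hyt' : y ∉ [x] ++ d.take j := by
        simpa [hγ, List.take_succ_cons] using hyt
      have hyL' : a ++ ([x] ++ d.take j ++ [y]) ∈ L := by
        simpa [hγ, List.take_succ_cons, List.append_assoc] using hyL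
      have := hdleg (d.take j) (d.get ⟨j, hj⟩) (d.drop (j + 1)) hdec y hya hyt' hyL'
      simpa [hγ, List.take_succ_cons, List.append_assoc] using this
  · intro β hβ
    have := hgb _ hβ
    simpa using this
  · intro β' hβ'
    have := hbasic _ hβ'
    simpa using this
  · have h1 : ¬ w (a ++ x :: d) ≤ w (a ++ z :: b) :=
      hnot d (by simpa using hγL) (by simpa [hγ] using hgb)
    simpa [hγ] using not_le.mp h1
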